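/- If a nonzero scalar multiple of the matrix unit e_{i,i+k-1} equals an evaluation of a multilinear polynomial p on upper triangular matrix units, then every matrix unit e_{l, l+k-1} for l = 1, ..., n-k+1 (i.e., all matrix units on the same diagonal) lies in the image of p on UT_n. -/

import Mathlib

open Matrix

namespace Stmt2Aux

variable {K : Type*} [Field K] {n : ℕ}

/-- window condition: index `a` shifted by `l - i` stays inside `Fin n`. -/
def okp (i l : ℕ) (a : Fin n) : Prop := i ≤ (a : ℕ) + l ∧ (a : ℕ) + l < n + i

instance (i l : ℕ) (a : Fin n) : Decidable (okp i l a) := by unfold okp; infer_instance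

/-- shift map -/
def gmap (i l : ℕ) (a : Fin n) : Fin n :=
  if h : (a : ℕ) + l - i < n then ⟨(a : ℕ) + l - i, h⟩ else a

lemma gmap_coe {i l : ℕ} {a : Fin n} (h : okp i l a) :
    ((gmap i l a : Fin n) : ℕ) = (a : ℕ) + l - i := by
  obtain ⟨h1, h2⟩ := h
  rw [gmap, dif_pos (by omega)]

lemma gmap_inj {i l : ℕ} {a b : Fin n} (ha : okp i l a) (hb : okp i l b)
    (h : gmap i l a = gmap i l b) : a = b := by
  have h1 := gmap_coe ha
  have h2 := gmap_coe hb
  have h3 := congrArg Fin.val h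
  obtain ⟨u1, u2⟩ := ha
  obtain ⟨u3, u4⟩ := hb
  exact Fin.ext (by omega)

/-- the substituted matrix units -/
def Aop (i l : ℕ) (p : Fin n × Fin n) : Matrix (Fin n) (Fin n) K :=
  if okp i l p.1 ∧ okp i l p.2 then
    Matrix.single (gmap i l p.1) (gmap i l p.2) (1 : K) else 0

lemma chain (i l : ℕ) (v : List (Fin n × Fin n)) : ∀ p : Fin n × Fin n,
    (∀ x ∈ p :: v, x.1 ≤ x.2) →
    ((((p :: v).map (fun q => Matrix.single q.1 q.2 (1 : K))).prod = 0 ∧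
      (((p :: v).map (Aop (K := K) i l))).prod = 0)
    ∨ ∃ b : Fin n, p.1 ≤ b ∧
       (((p :: v).map (fun q => Matrix.single q.1 q.2 (1 : K))).prod
          = Matrix.single p.1 b 1) ∧
       (((p :: v).map (Aop (K := K) i l))).prod =
         if okp i l p.1 ∧ okp i l b then
           Matrix.single (gmap i l p.1) (gmap i l b) (1 : K) else 0) := by
  induction v with
  | nil =>
    intro p hle
    right
    refine ⟨p.2, hle p (by simp), by simp, by simp [Aop]⟩
  | cons p1 w ih =>
    intro p hle
    have hle1 : ∀ x ∈ p1 :: w, x.1 ≤ x.2 := fun x hx => hle x (List.mem_cons_of_mem _ hx)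
    have hpp : p.1 ≤ p.2 := hle p (List.mem_cons_self)
    rcases ih p1 hle1 with ⟨hP, hQ⟩ | ⟨b1, hb1, hP, hQ⟩
    · left
      constructor
      · rw [List.map_cons, List.prod_cons, hP, mul_zero]
      · rw [List.map_cons, List.prod_cons, hQ, mul_zero]
    · by_cases h : p.2 = p1.1
      · right
        have hpb : p.1 ≤ b1 := le_trans hpp (le_trans (le_of_eq h) hb1)
        refine ⟨b1, hpb, ?_, ?_⟩
        · rw [List.map_cons, List.prod_cons, hP, h, Matrix.single_mul_single_same, one_mul]
        · rw [List.map_cons, List.prod_cons, hQ]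
          by_cases h1 : okp i l p.1
          · by_cases h2 : okp i l p.2
            · by_cases h3 : okp i l b1
              · rw [Aop, if_pos ⟨h1, h2⟩, if_pos ⟨h ▸ h2, h3⟩, if_pos ⟨h1, h3⟩, h,
                  Matrix.single_mul_single_same, one_mul]
              · rw [if_neg (fun hc => h3 hc.2), mul_zero, if_neg (fun hc => h3 hc.2)]
            · rw [Aop, if_neg (fun hc => h2 hc.2), zero_mul, eq_comm, if_neg]
              rintro ⟨hc1, hc3⟩
              apply h2
              obtain ⟨u1, u2⟩ := hc1
              obtain ⟨u3, u4⟩ := hc3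
              have w1 : (p.1 : ℕ) ≤ (p.2 : ℕ) := hpp
              have w2 : ((p1.1 : Fin n) : ℕ) ≤ (b1 : ℕ) := hb1
              have w3 : (p.2 : ℕ) = (p1.1 : ℕ) := congrArg Fin.val h
              exact ⟨by omega, by omega⟩
          · rw [Aop, if_neg (fun hc => h1 hc.1), zero_mul, eq_comm, if_neg (fun hc => h1 hc.1)]
      · left
        constructor
        · rw [List.map_cons, List.prod_cons, hP, Matrix.single_mul_single_of_ne (h := h)]
        · rw [List.map_cons, List.prod_cons, hQ]
          by_cases h12 : okp i l p.1 ∧ okp i l p.2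
          · rw [Aop, if_pos h12]
            by_cases h34 : okp i l p1.1 ∧ okp i l b1
            · rw [if_pos h34, Matrix.single_mul_single_of_ne (h := fun he => h (gmap_inj h12.2 h34.1 he))]

            · rw [if_neg h34, mul_zero]
          · rw [Aop, if_neg h12, zero_mul]

/-- compression/shift map on matrices -/
def Phi (i l : ℕ) (M : Matrix (Fin n) (Fin n) K) : Matrix (Fin n) (Fin n) K :=
  fun x y =>
    if h : l ≤ (x : ℕ) + i ∧ (x : ℕ) + i < n + l ∧ l ≤ (y : ℕ) + i ∧ (y : ℕ) + i < n + l then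
      M ⟨(x : ℕ) + i - l, by omega⟩ ⟨(y : ℕ) + i - l, by omega⟩
    else 0

lemma Phi_zero (i l : ℕ) : Phi i l (0 : Matrix (Fin n) (Fin n) K) = 0 := by
  funext x y
  simp [Phi]

lemma Phi_smul (i l : ℕ) (c : K) (M : Matrix (Fin n) (Fin n) K) :
    Phi i l (c • M) = c • Phi i l M := by
  funext x y
  simp only [Phi, Matrix.smul_apply]
  split
  · rfl
  · rw [smul_zero]

lemma Phi_sum {ι : Type*} (i l : ℕ) (s : Finset ι) (f : ι → Matrix (Fin n) (Fin n) K) :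
    Phi i l (∑ x ∈ s, f x) = ∑ x ∈ s, Phi i l (f x) := by
  funext x y
  simp only [Phi, Matrix.sum_apply]
  by_cases h : l ≤ (x : ℕ) + i ∧ (x : ℕ) + i < n + l ∧ l ≤ (y : ℕ) + i ∧ (y : ℕ) + i < n + l
  · rw [dif_pos h]
    exact Finset.sum_congr rfl fun z _ => by rw [dif_pos h]
  · rw [dif_neg h]
    exact (Finset.sum_eq_zero fun z _ => by rw [dif_neg h]).symm

lemma Phi_std (i l : ℕ) (a b : Fin n) :
    Phi i l (Matrix.single a b (1 : K)) =
      if okp i l a ∧ okp i l b then Matrix.single (gmap i l a) (gmap i l b) (1 : K) else 0 := by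
  by_cases hab : okp i l a ∧ okp i l b
  · rw [if_pos hab]
    obtain ⟨ha, hb⟩ := hab
    have hga := gmap_coe ha
    have hgb := gmap_coe hb
    obtain ⟨u1, u2⟩ := ha
    obtain ⟨u3, u4⟩ := hb
    funext x y
    simp only [Phi, Matrix.single, Matrix.of_apply]
    split
    next h =>
      by_cases hc : gmap i l a = x ∧ gmap i l b = y
      · rw [if_pos hc]
        have v1 : ((gmap i l a : Fin n) : ℕ) = (x : ℕ) := congrArg Fin.val hc.1
        have v2 : ((gmap i l b : Fin n) : ℕ) = (y : ℕ) := congrArg Fin.val hc.2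
        rw [if_pos]
        exact ⟨Fin.ext (show (a : ℕ) = (x : ℕ) + i - l by omega),
               Fin.ext (show (b : ℕ) = (y : ℕ) + i - l by omega)⟩
      · rw [if_neg hc, if_neg]
        rintro ⟨h1, h2⟩
        have v1 : (a : ℕ) = (x : ℕ) + i - l := congrArg Fin.val h1
        have v2 : (b : ℕ) = (y : ℕ) + i - l := congrArg Fin.val h2
        apply hc
        exact ⟨Fin.ext (show ((gmap i l a : Fin n) : ℕ) = (x : ℕ) by omega),
               Fin.ext (show ((gmap i l b : Fin n) : ℕ) = (y : ℕ) by omega)⟩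
    next h =>
      rw [eq_comm, if_neg]
      rintro ⟨h1, h2⟩
      apply h
      have v1 : ((gmap i l a : Fin n) : ℕ) = (x : ℕ) := congrArg Fin.val h1
      have v2 : ((gmap i l b : Fin n) : ℕ) = (y : ℕ) := congrArg Fin.val h2
      have wa : (a : ℕ) < n := a.isLt
      have wb : (b : ℕ) < n := b.isLt
      refine ⟨by omega, by omega, by omega, by omega⟩
  · rw [if_neg hab]
    funext x y
    simp only [Phi, Matrix.single, Matrix.of_apply, Matrix.zero_apply]
    split
    next h =>
      rw [if_neg]
      rintro ⟨h1, h2⟩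
      apply hab
      have v1 : (a : ℕ) = (x : ℕ) + i - l := congrArg Fin.val h1
      have v2 : (b : ℕ) = (y : ℕ) + i - l := congrArg Fin.val h2
      have wx : (x : ℕ) < n := x.isLt
      have wy : (y : ℕ) < n := y.isLt
      exact ⟨⟨by omega, by omega⟩, ⟨by omega, by omega⟩⟩
    next h => rfl

lemma ofFn_smul_prod : ∀ (m : ℕ) (e : Fin m → K) (B : Fin m → Matrix (Fin n) (Fin n) K),
    (List.ofFn fun q => e q • B q).prod = (∏ q, e q) • (List.ofFn B).prod := by
  intro m
  induction m with
  | zero => intro e B; simp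
  | succ m ih =>
    intro e B
    rw [List.ofFn_succ, List.ofFn_succ, List.prod_cons, List.prod_cons,
      ih (fun q => e q.succ) (fun q => B q.succ), Fin.prod_univ_succ,
      smul_mul_assoc, mul_smul_comm, smul_smul]

end Stmt2Aux

open Stmt2Aux in
/-- If a nonzero scalar multiple of `e_{i, i+d}` (a matrix unit on the
`(d+1)`-st diagonal, i.e. `d = k - 1`) is an evaluation of the multilinear polynomial
`p = Σ_σ α_σ x_{σ(1)} ⋯ x_{σ(m)}` on upper triangular matrix units, then every matrix
unit `e_{l, l+d}` on the same diagonal lies in the image of `p` on `UT_n`. -/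
theorem stmt2 {K : Type*} [Field K] {n m : ℕ} (hn : 2 ≤ n)
    (α : Equiv.Perm (Fin m) → K)
    (i d : ℕ) (hi : i < n) (hid : i + d < n)
    (c : K) (hc : c ≠ 0)
    (r s : Fin m → Fin n) (hrs : ∀ q, r q ≤ s q)
    (heval : (∑ σ : Equiv.Perm (Fin m), α σ •
        (List.ofFn fun q => Matrix.single (r (σ q)) (s (σ q)) (1 : K)).prod)
      = c • Matrix.single (⟨i, hi⟩ : Fin n) (⟨i + d, hid⟩ : Fin n) (1 : K)) :
    ∀ (l : ℕ) (hld : l + d < n),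
      ∃ A : Fin m → Matrix (Fin n) (Fin n) K,
        (∀ q, ∀ a b : Fin n, b < a → A q a b = 0) ∧
        (∑ σ : Equiv.Perm (Fin m), α σ •
            (List.ofFn fun q => A (σ q)).prod)
          = Matrix.single (⟨l, by omega⟩ : Fin n) (⟨l + d, hld⟩ : Fin n) (1 : K) := by
  intro l hld
  have hm : m ≠ 0 := by
    rintro rfl
    obtain ⟨z, hz⟩ : ∃ z : Fin n, z ≠ (⟨i, hi⟩ : Fin n) := by
      rcases Nat.eq_zero_or_pos i with h0 | h0
      · exact ⟨⟨1, by omega⟩, fun he => by simp [Fin.ext_iff, h0] at he⟩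
      · exact ⟨⟨0, by omega⟩, fun he => by simp [Fin.ext_iff] at he; omega⟩
    have hL : (∑ σ : Equiv.Perm (Fin 0), α σ •
        (List.ofFn fun q => Matrix.single (r (σ q)) (s (σ q)) (1 : K)).prod)
        = (∑ σ : Equiv.Perm (Fin 0), α σ) • (1 : Matrix (Fin n) (Fin n) K) := by
      rw [Finset.sum_smul]
      exact Finset.sum_congr rfl fun σ _ => by rw [List.ofFn_zero, List.prod_nil]
    rw [hL] at heval
    have h1 := congrArg (fun M : Matrix (Fin n) (Fin n) K => M z z) heval
    simp only [Matrix.smul_apply, Matrix.one_apply_eq,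
      Matrix.single_apply_of_ne (i := (⟨i, hi⟩ : Fin n)) (i' := z) (j' := z) (fun hh => hz hh.1.symm),
      smul_zero, smul_eq_mul, mul_one, Matrix.single, Matrix.of_apply, Ne.symm hz, false_and,
      if_false, mul_zero] at h1
    rw [h1, zero_smul] at heval
    have h2 := congrArg (fun M : Matrix (Fin n) (Fin n) K => M ⟨i, hi⟩ ⟨i + d, hid⟩) heval.symm
    beta_reduce at h2
    rw [Matrix.zero_apply, Matrix.smul_apply, Matrix.single_apply_same,
      smul_eq_mul, mul_one] at h2
    exact hc h2
  obtain ⟨m', rfl⟩ : ∃ m', m = m' + 1 := ⟨m - 1, by omega⟩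
  have hok1 : okp i l (⟨i, hi⟩ : Fin n) := ⟨show i ≤ i + l by omega, show i + l < n + i by omega⟩
  have hok2 : okp i l (⟨i + d, hid⟩ : Fin n) :=
    ⟨show i ≤ i + d + l by omega, show i + d + l < n + i by omega⟩
  refine ⟨fun q => (if (q : ℕ) = 0 then c⁻¹ else 1) • Aop i l (r q, s q), ?_, ?_⟩
  · intro q a b hba
    have hz : Aop (K := K) i l (r q, s q) a b = 0 := by
      simp only [Aop]
      split
      next hok =>
        apply Matrix.single_apply_of_ne
        rintro ⟨h1, h2⟩
        have g1 := gmap_coe hok.1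
        have g2 := gmap_coe hok.2
        have v1 : ((gmap i l (r q) : Fin n) : ℕ) = (a : ℕ) := congrArg Fin.val h1
        have v2 : ((gmap i l (s q) : Fin n) : ℕ) = (b : ℕ) := congrArg Fin.val h2
        have hr : ((r q : Fin n) : ℕ) ≤ ((s q : Fin n) : ℕ) := hrs q
        have hba' : (b : ℕ) < (a : ℕ) := hba
        obtain ⟨w1, w2⟩ := hok.1
        omega
      next => simp
    show ((if (q : ℕ) = 0 then c⁻¹ else 1) • Aop (K := K) i l (r q, s q)) a b = 0
    rw [Matrix.smul_apply, hz, smul_zero]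
  · have hQP : ∀ σ : Equiv.Perm (Fin (m' + 1)),
        (List.ofFn fun q => Aop (K := K) i l (r (σ q), s (σ q))).prod
          = Phi i l (List.ofFn fun q =>
              Matrix.single (r (σ q)) (s (σ q)) (1 : K)).prod := by
      intro σ
      set p : Fin n × Fin n := (r (σ 0), s (σ 0)) with hp
      set v : List (Fin n × Fin n) :=
        List.ofFn (fun q : Fin m' => (r (σ q.succ), s (σ q.succ))) with hv
      have hmem : ∀ x ∈ p :: v, x.1 ≤ x.2 := by
        intro x hx
        rcases List.mem_cons.1 hx with hx | hx
        · rw [hx]; exact hrs _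
        · rw [hv, List.mem_ofFn] at hx
          obtain ⟨q, hq⟩ := hx
          rw [← hq]; exact hrs _
      have e1 : ((p :: v).map (fun q => Matrix.single q.1 q.2 (1 : K))).prod
          = (List.ofFn fun q => Matrix.single (r (σ q)) (s (σ q)) (1 : K)).prod := by
        rw [List.ofFn_succ, List.map_cons, List.map_ofFn]
        rfl
      have e2 : ((p :: v).map (Aop (K := K) i l)).prod
          = (List.ofFn fun q => Aop (K := K) i l (r (σ q), s (σ q))).prod := by
        rw [List.ofFn_succ, List.map_cons, List.map_ofFn]
        rfl
      rcases chain (K := K) i l v p hmem with ⟨hP, hQ⟩ | ⟨b, hb, hP, hQ⟩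
      · rw [← e2, hQ, ← e1, hP, Phi_zero]
      · rw [← e2, hQ, ← e1, hP, Phi_std]
    have key : (∑ σ : Equiv.Perm (Fin (m' + 1)), α σ •
        (List.ofFn fun q => Aop (K := K) i l (r (σ q), s (σ q))).prod)
        = c • Matrix.single (⟨l, by omega⟩ : Fin n) (⟨l + d, hld⟩ : Fin n) (1 : K) := by
      have step1 : (∑ σ : Equiv.Perm (Fin (m' + 1)), α σ •
          (List.ofFn fun q => Aop (K := K) i l (r (σ q), s (σ q))).prod)
          = Phi i l (∑ σ : Equiv.Perm (Fin (m' + 1)), α σ •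
              (List.ofFn fun q =>
                Matrix.single (r (σ q)) (s (σ q)) (1 : K)).prod) := by
        rw [Phi_sum]
        exact Finset.sum_congr rfl fun σ _ => by rw [hQP σ, Phi_smul]
      have gg1 : gmap i l (⟨i, hi⟩ : Fin n) = (⟨l, by omega⟩ : Fin n) :=
        Fin.ext (by rw [gmap_coe hok1]; show i + l - i = l; omega)
      have gg2 : gmap i l (⟨i + d, hid⟩ : Fin n) = (⟨l + d, hld⟩ : Fin n) :=
        Fin.ext (by rw [gmap_coe hok2]; show i + d + l - i = l + d; omega)
      rw [step1, heval, Phi_smul, Phi_std, if_pos ⟨hok1, hok2⟩, gg1, gg2]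
    have hsplit : ∀ σ : Equiv.Perm (Fin (m' + 1)),
        (List.ofFn fun q => (if ((σ q : Fin (m' + 1)) : ℕ) = 0 then c⁻¹ else 1) •
            Aop (K := K) i l (r (σ q), s (σ q))).prod
        = c⁻¹ • (List.ofFn fun q => Aop (K := K) i l (r (σ q), s (σ q))).prod := by
      intro σ
      rw [ofFn_smul_prod (m' + 1)
        (fun q => if ((σ q : Fin (m' + 1)) : ℕ) = 0 then c⁻¹ else 1)
        (fun q => Aop (K := K) i l (r (σ q), s (σ q)))]
      congr 1
      rw [Equiv.prod_comp σ (fun q : Fin (m' + 1) => if (q : ℕ) = 0 then c⁻¹ else 1)]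
      rw [Fin.prod_univ_succ]
      simp
    have step : (∑ σ : Equiv.Perm (Fin (m' + 1)), α σ •
          (List.ofFn fun q => (fun q : Fin (m' + 1) => (if (q : ℕ) = 0 then c⁻¹ else 1) •
            Aop (K := K) i l (r q, s q)) (σ q)).prod)
        = c⁻¹ • (∑ σ : Equiv.Perm (Fin (m' + 1)), α σ •
            (List.ofFn fun q => Aop (K := K) i l (r (σ q), s (σ q))).prod) := by
      rw [Finset.smul_sum]
      refine Finset.sum_congr rfl fun σ _ => ?_
      show α σ • (List.ofFn fun q => (if ((σ q : Fin (m' + 1)) : ℕ) = 0 then c⁻¹ else 1) •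
          Aop (K := K) i l (r (σ q), s (σ q))).prod = _
      rw [hsplit σ, smul_comm]
    rw [step, key, smul_smul, inv_mul_cancel₀ hc, one_smul]
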